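/- Let p be an odd prime and a the rooted automorphism of the p-regular tree given by the cycle σ = (0 1 ... p-1). Then the centraliser of A = ⟨a⟩ in Aut(X*) equals κ_1(Aut(X*)) ⋊ A, i.e. an automorphism g centralises a if and only if g = κ_1(h)·a^k for some h ∈ Aut(X*) and k ∈ ℤ, where κ_1(h) is the automorphism whose p first-layer sections all equal h and whose root label is trivial. -/

import Mathlib

/-!  Automorphisms of the `p`-regular rooted tree `X*`, `X = {0, …, p-1} = ℤ/pℤ`, encoded by
their portraits: an automorphism is the collection of its labels `g|^v ∈ Sym(X)`, `v ∈ X*`. -/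

/-- The automorphism group of the `p`-regular rooted tree, encoded via portraits. -/
def TreeAut (p : ℕ) := List (ZMod p) → Equiv.Perm (ZMod p)

instance {p : ℕ} : CoeFun (TreeAut p) (fun _ => List (ZMod p) → Equiv.Perm (ZMod p)) :=
  ⟨fun g => g⟩

/-- The action of a portrait on the words of the tree. -/
def pact {p : ℕ} : TreeAut p → List (ZMod p) → List (ZMod p)
  | _, [] => []
  | L, x :: v => L [] x :: pact (fun w => L (x :: w)) v

/-- The inverse action of a portrait on the words of the tree. -/
def pactInv {p : ℕ} : TreeAut p → List (ZMod p) → List (ZMod p)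
  | _, [] => []
  | L, y :: v => (L [])⁻¹ y :: pactInv (fun w => L ((L [])⁻¹ y :: w)) v

theorem pactInv_pact {p : ℕ} (L : TreeAut p) (v : List (ZMod p)) :
    pactInv L (pact L v) = v := by
  induction v generalizing L with
  | nil => rfl
  | cons x v ih => simp [pact, pactInv]; exact ih _

theorem pact_pactInv {p : ℕ} (L : TreeAut p) (v : List (ZMod p)) :
    pact L (pactInv L v) = v := by
  induction v generalizing L with
  | nil => rfl
  | cons x v ih => simp [pact, pactInv]; exact ih _

theorem pact_one {p : ℕ} (v : List (ZMod p)) :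
    pact (fun _ => 1 : TreeAut p) v = v := by
  induction v with
  | nil => rfl
  | cons x v ih => simpa [pact] using ih

theorem pact_mulP {p : ℕ} (L M : TreeAut p) (v : List (ZMod p)) :
    pact (fun u => L (pact M u) * M u) v = pact L (pact M v) := by
  induction v generalizing L M with
  | nil => rfl
  | cons x v ih =>
    simp only [pact, Equiv.Perm.mul_apply]
    exact congrArg _ (ih (fun u => L ((M []) x :: u)) (fun w => M (x :: w)))

instance {p : ℕ} : One (TreeAut p) := ⟨fun _ => 1⟩
instance {p : ℕ} : Mul (TreeAut p) := ⟨fun L M => fun v => L (pact M v) * M v⟩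
instance {p : ℕ} : Inv (TreeAut p) := ⟨fun L => fun v => (L (pactInv L v))⁻¹⟩

theorem TreeAut.mul_def {p : ℕ} (L M : TreeAut p) (v : List (ZMod p)) :
    (L * M) v = L (pact M v) * M v := rfl
theorem TreeAut.one_def {p : ℕ} (v : List (ZMod p)) : (1 : TreeAut p) v = 1 := rfl
theorem TreeAut.inv_def {p : ℕ} (L : TreeAut p) (v : List (ZMod p)) :
    L⁻¹ v = (L (pactInv L v))⁻¹ := rfl

instance {p : ℕ} : Group (TreeAut p) where
  mul_assoc a b c := by
    funext v
    show (a * b) (pact c v) * c v = a (pact (b * c) v) * ((b * c) v)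
    show a (pact b (pact c v)) * b (pact c v) * c v
        = a (pact (fun u => b (pact c u) * c u) v) * (b (pact c v) * c v)
    rw [pact_mulP, mul_assoc]
  one_mul a := by
    funext v
    show (1 : TreeAut p) (pact a v) * a v = a v
    simp [TreeAut.one_def]
  mul_one a := by
    funext v
    show a (pact (fun _ => 1) v) * (1 : Equiv.Perm (ZMod p)) = a v
    rw [pact_one, mul_one]
  inv_mul_cancel a := by
    funext v
    show (a (pactInv a (pact a v)))⁻¹ * a v = (1 : TreeAut p) v
    rw [pactInv_pact, TreeAut.one_def, inv_mul_cancel]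

/-- The rooted automorphism with label `σ` at the root and trivial labels elsewhere. -/
def rootedAut {p : ℕ} (σ : Equiv.Perm (ZMod p)) : TreeAut p :=
  fun v => if v = [] then σ else 1

/-- The rooted automorphism `a` given by the `p`-cycle `σ = (0 1 … p-1)`, `x ↦ x + 1`. -/
def aAut (p : ℕ) : TreeAut p := rootedAut (Equiv.addRight (1 : ZMod p))

/-- The section `g|_x` of `g` at the first-layer vertex `x`. -/
def sect {p : ℕ} (g : TreeAut p) (x : ZMod p) : TreeAut p := fun v => g (x :: v)

/-- The `n`-th diagonal `κ_n(g) = ψ_n⁻¹(g, …, g)`. -/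
def kappa {p : ℕ} (n : ℕ) (g : TreeAut p) : TreeAut p :=
  fun v => if n ≤ v.length then g (v.drop n) else 1

/-- `ψ_n⁻¹(g, 1, …, 1)`: the automorphism acting as `g` below the vertex `0^n` and trivially
elsewhere. -/
def embAt {p : ℕ} (n : ℕ) (g : TreeAut p) : TreeAut p :=
  fun v => if List.replicate n (0 : ZMod p) <+: v then g (v.drop n) else 1

/-- The scalar product of two vectors in `𝔽_p^r`. -/
def dotp {p r : ℕ} (n m : Fin r → ZMod p) : ZMod p := ∑ j, n j * m j

/-- The directed generator `b^n` of the multi-GGS group with defining data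
`e : ℤ/pℤ → 𝔽_p^r` (the columns of the matrix `E`, with `e 0 = 0`): it satisfies
`ψ_1(b^n) = (b^n, a^{n·e_1}, …, a^{n·e_{p-1}})`. -/
def bAut {p r : ℕ} (e : ZMod p → Fin r → ZMod p) (n : Fin r → ZMod p) : TreeAut p :=
  fun v =>
    match v.getLast? with
    | none => 1
    | some i =>
      if ∀ x ∈ v.dropLast, x = 0 then Equiv.addRight (dotp n (e i)) else 1

/-- The multi-GGS group `G_E = ⟨A ∪ B⟩` associated to the data `e`. -/
def GGS {p r : ℕ} (e : ZMod p → Fin r → ZMod p) : Subgroup (TreeAut p) :=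
  Subgroup.closure ({aAut p} ∪ Set.range (bAut e))

open scoped commutatorElement

/-- The element `c̲ = ψ_1⁻¹([b^{s_1}, a], 1, …, 1)`. -/
def cAut {p r : ℕ} (e : ZMod p → Fin r → ZMod p) : TreeAut p :=
  embAt 1 ⁅bAut e (fun j => if (j : ℕ) = 0 then 1 else 0), aAut p⁆

/-- The regularisation `G_reg = ⟨G ∪ {c̲}⟩` of a multi-GGS group. -/
def GGSreg {p r : ℕ} (e : ZMod p → Fin r → ZMod p) : Subgroup (TreeAut p) :=
  Subgroup.closure ({aAut p, cAut e} ∪ Set.range (bAut e))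

/-- The word length on `Aut(X*)` with respect to the generating set `A ∪ B` of the multi-GGS
group determined by `e`. -/
noncomputable def ggsLength {p r : ℕ} (e : ZMod p → Fin r → ZMod p) (g : TreeAut p) : ℕ :=
  sInf {m | ∃ l : List (TreeAut p),
    (∀ x ∈ l, x ∈ Subgroup.zpowers (aAut p) ∨ x ∈ Set.range (bAut e)) ∧
    l.length = m ∧ l.prod = g}

/-- `e` defines a *non-constant* multi-GGS group: the defining space `E` is not the line of
constant vectors. -/
def NonConstant {p r : ℕ} (e : ZMod p → Fin r → ZMod p) : Prop :=
  (∃ i j : ZMod p, i ≠ 0 ∧ j ≠ 0 ∧ e i ≠ e j) ∧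
    LinearIndependent (ZMod p) (fun j : Fin r => fun i : ZMod p => e i j)

/-- `e` defines a *symmetric* GGS group: `r = 1`, the defining space is contained in the
symmetric subspace `{λ : λ_i = λ_{p-i}}`, and the group is non-constant. -/
def IsSymmetricGGS {p r : ℕ} (e : ZMod p → Fin r → ZMod p) : Prop :=
  r = 1 ∧ (∀ (i : ZMod p) (j : Fin r), e i j = e (-i) j) ∧ NonConstant e

/-- `e` defines a *regular* multi-GGS group: non-constant and not symmetric. -/
def IsRegularGGS {p r : ℕ} (e : ZMod p → Fin r → ZMod p) : Prop :=
  NonConstant e ∧ ¬ IsSymmetricGGS e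


section Aux
open Equiv
variable {p : ℕ}

lemma rootedAut_nil (σ : Equiv.Perm (ZMod p)) : rootedAut σ [] = σ := rfl

lemma rootedAut_cons (σ : Equiv.Perm (ZMod p)) (x : ZMod p) (v : List (ZMod p)) :
    rootedAut σ (x :: v) = 1 := by simp [rootedAut]

lemma pact_cons (L : TreeAut p) (x : ZMod p) (v : List (ZMod p)) :
    pact L (x :: v) = L [] x :: pact (fun w => L (x :: w)) v := rfl

lemma pact_rootedAut (σ : Equiv.Perm (ZMod p)) (x : ZMod p) (v : List (ZMod p)) :
    pact (rootedAut σ) (x :: v) = σ x :: v := by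
  rw [pact_cons]
  have h1 : (fun w => rootedAut σ (x :: w)) = (fun _ => 1 : TreeAut p) := by
    funext w; simp [rootedAut]
  rw [h1, pact_one, rootedAut_nil]

lemma rootedAut_mul (σ τ : Equiv.Perm (ZMod p)) :
    rootedAut σ * rootedAut τ = rootedAut (σ * τ) := by
  funext v
  rw [TreeAut.mul_def]
  cases v with
  | nil => simp [rootedAut, pact]
  | cons x v => rw [pact_rootedAut]; simp [rootedAut_cons]

lemma rootedAut_inv (σ : Equiv.Perm (ZMod p)) : (rootedAut σ)⁻¹ = rootedAut σ⁻¹ := by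
  funext v
  rw [TreeAut.inv_def]
  cases v with
  | nil => simp [rootedAut, pactInv]
  | cons x v =>
    rw [show pactInv (rootedAut σ) (x :: v)
        = ((rootedAut σ [])⁻¹ x) :: pactInv (fun w => rootedAut σ ((rootedAut σ [])⁻¹ x :: w)) v from rfl]
    simp [rootedAut_cons]

lemma rootedAut_one : rootedAut (1 : Equiv.Perm (ZMod p)) = 1 := by
  funext v; simp [rootedAut, TreeAut.one_def]

lemma aAut_zpow (k : ℤ) : aAut p ^ k = rootedAut (Equiv.addRight ((k : ZMod p))) := by
  have hpow : ∀ n : ℕ, aAut p ^ n = rootedAut (Equiv.addRight ((n : ZMod p))) := by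
    intro n
    induction n with
    | zero => simpa using rootedAut_one.symm
    | succ n ih =>
      rw [pow_succ, ih, aAut, rootedAut_mul]
      have : Equiv.addRight ((n : ZMod p)) * Equiv.addRight (1 : ZMod p)
          = Equiv.addRight (((n + 1 : ℕ) : ZMod p)) := by
        ext x; simp [Equiv.Perm.mul_apply]; push_cast; ring
      rw [this]
  cases k with
  | ofNat n => simpa using hpow n
  | negSucc n =>
    rw [zpow_negSucc, hpow (n+1), rootedAut_inv]
    have : (Equiv.addRight (((n + 1 : ℕ) : ZMod p)))⁻¹
        = Equiv.addRight ((Int.negSucc n : ZMod p)) := by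
      refine inv_eq_of_mul_eq_one_right ?_
      ext x
      simp only [Equiv.Perm.mul_apply, Equiv.coe_addRight, Equiv.Perm.coe_one, id_eq,
        Int.negSucc_eq]
      push_cast
      ring
    rw [this]

lemma kappa_one_nil (h : TreeAut p) : kappa 1 h [] = 1 := by simp [kappa]

lemma kappa_one_cons (h : TreeAut p) (x : ZMod p) (v : List (ZMod p)) :
    kappa 1 h (x :: v) = h v := by simp [kappa]

/-- centraliser of the p-cycle in the symmetric group -/
lemma perm_comm_addRight [NeZero p] (τ : Equiv.Perm (ZMod p))
    (hc : τ * Equiv.addRight (1 : ZMod p) = Equiv.addRight (1 : ZMod p) * τ) :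
    τ = Equiv.addRight (τ 0) := by
  have step : ∀ x : ZMod p, τ (x + 1) = τ x + 1 := by
    intro x
    have := congrArg (fun f : Equiv.Perm (ZMod p) => f x) hc
    simpa [Equiv.Perm.mul_apply] using this
  have key : ∀ n : ℕ, τ ((n : ZMod p)) = τ 0 + n := by
    intro n
    induction n with
    | zero => simp
    | succ n ih => push_cast; rw [step, ih]; ring
  ext x
  have hx : ((x.val : ℕ) : ZMod p) = x := ZMod.natCast_rightInverse x
  have : τ x = τ 0 + x := by
    calc τ x = τ ((x.val : ℕ) : ZMod p) := by rw [hx]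
    _ = τ 0 + ((x.val : ℕ) : ZMod p) := key x.val
    _ = τ 0 + x := by rw [hx]
  simp [this, add_comm]


lemma mul_apply_nil (L M : TreeAut p) : (L * M) [] = L [] * M [] := by
  rw [TreeAut.mul_def]; rfl

lemma aAut_nil : aAut p [] = Equiv.addRight (1 : ZMod p) := rfl

lemma mul_aAut_apply_cons (g : TreeAut p) (x : ZMod p) (v : List (ZMod p)) :
    (g * aAut p) (x :: v) = g ((x + 1) :: v) := by
  rw [TreeAut.mul_def, aAut, pact_rootedAut, rootedAut_cons, mul_one]
  rfl

lemma aAut_mul_apply_cons (g : TreeAut p) (x : ZMod p) (v : List (ZMod p)) :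
    (aAut p * g) (x :: v) = g (x :: v) := by
  rw [TreeAut.mul_def, pact_cons, aAut, rootedAut_cons, one_mul]

lemma commute_aAut_of (K : TreeAut p)
    (h0 : K [] * Equiv.addRight (1 : ZMod p) = Equiv.addRight 1 * K [])
    (hs : ∀ (x : ZMod p) (v : List (ZMod p)), K ((x + 1) :: v) = K (x :: v)) :
    K * aAut p = aAut p * K := by
  funext v
  cases v with
  | nil =>
    rw [mul_apply_nil, mul_apply_nil, aAut_nil]
    exact h0
  | cons x v =>
    rw [mul_aAut_apply_cons, aAut_mul_apply_cons, hs]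

lemma addRight_commute (c d : ZMod p) :
    Equiv.addRight c * Equiv.addRight d = Equiv.addRight d * Equiv.addRight c := by
  ext x
  simp only [Equiv.Perm.mul_apply, Equiv.coe_addRight]
  ring

lemma kappa_mul_zpow_nil (h : TreeAut p) (k : ℤ) :
    (kappa 1 h * aAut p ^ k) [] = Equiv.addRight ((k : ZMod p)) := by
  rw [mul_apply_nil, kappa_one_nil, one_mul, aAut_zpow, rootedAut_nil]

lemma kappa_mul_zpow_cons (h : TreeAut p) (k : ℤ) (x : ZMod p) (v : List (ZMod p)) :
    (kappa 1 h * aAut p ^ k) (x :: v) = h v := by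
  rw [TreeAut.mul_def, aAut_zpow, pact_rootedAut, rootedAut_cons, mul_one, kappa_one_cons]

end Aux

/-- Let `p` be an odd prime and `a` the rooted automorphism of the `p`-regular tree given by
the cycle `σ = (0 1 … p-1)`.  Then the centraliser of `A = ⟨a⟩` in `Aut(X*)` equals
`κ_1(Aut(X*)) ⋊ A`: an automorphism `g` centralises `a` if and only if `g = κ_1(h) · a^k` for
some `h ∈ Aut(X*)` and `k ∈ ℤ`. -/
theorem centralizer_rooted_a (p : ℕ) [Fact p.Prime] (hp : Odd p) (g : TreeAut p) :
    g ∈ Subgroup.centralizer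
        ((Subgroup.zpowers (aAut p) : Subgroup (TreeAut p)) : Set (TreeAut p)) ↔
      ∃ (h : TreeAut p) (k : ℤ), g = kappa 1 h * aAut p ^ k := by
  haveI : NeZero p := ⟨(Fact.out : p.Prime).ne_zero⟩
  constructor
  · intro hg
    have hcomm : aAut p * g = g * aAut p :=
      Subgroup.mem_centralizer_iff.mp hg (aAut p) (Subgroup.mem_zpowers _)
    have h0 : g [] * Equiv.addRight (1 : ZMod p) = Equiv.addRight 1 * g [] := by
      have hh := congrArg (fun f : TreeAut p => f []) hcomm
      simp only [mul_apply_nil, aAut_nil] at hh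
      exact hh.symm
    have hshift : ∀ (x : ZMod p) (v : List (ZMod p)), g ((x + 1) :: v) = g (x :: v) := by
      intro x v
      have hh := congrArg (fun f : TreeAut p => f (x :: v)) hcomm
      simp only [mul_aAut_apply_cons, aAut_mul_apply_cons] at hh
      exact hh.symm
    have hconst : ∀ (x : ZMod p) (v : List (ZMod p)), g (x :: v) = g (0 :: v) := by
      intro x v
      have key : ∀ n : ℕ, g (((n : ZMod p)) :: v) = g ((0 : ZMod p) :: v) := by
        intro n
        induction n with
        | zero => norm_num
        | succ n ih => push_cast; rw [hshift, ih]
      have hx : ((x.val : ℕ) : ZMod p) = x := ZMod.natCast_rightInverse x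
      rw [← hx]; exact key x.val
    have hroot : g [] = Equiv.addRight (g [] 0) := perm_comm_addRight (g []) h0
    refine ⟨fun v => g ((0 : ZMod p) :: v), ((g [] 0).val : ℤ), ?_⟩
    funext v
    cases v with
    | nil =>
      refine Eq.trans ?_ (kappa_mul_zpow_nil _ _).symm
      conv_lhs => rw [hroot]
      congr 1
      push_cast
      exact (ZMod.natCast_rightInverse (g [] 0)).symm
    | cons x v =>
      refine Eq.trans ?_ (kappa_mul_zpow_cons _ _ x v).symm
      exact hconst x v
  · rintro ⟨h, k, rfl⟩
    rw [Subgroup.mem_centralizer_iff]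
    intro b hb
    rw [SetLike.mem_coe, Subgroup.mem_zpowers_iff] at hb
    obtain ⟨m, rfl⟩ := hb
    have hc : kappa 1 h * aAut p ^ k * aAut p = aAut p * (kappa 1 h * aAut p ^ k) := by
      apply commute_aAut_of
      · rw [kappa_mul_zpow_nil]
        exact addRight_commute _ _
      · intro x v
        rw [kappa_mul_zpow_cons, kappa_mul_zpow_cons]
    have hC : Commute (aAut p) (kappa 1 h * aAut p ^ k) := hc.symm
    exact (hC.zpow_left m).eq
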